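/- arXiv:1805.10084 — 2 statements merged into one kernel-verified Lean document; each statement's English description precedes it below -/
import Mathlib

section
/- For every integer k ≥ 1, the radio number of the middle graph M(P_{2k}) of the path P_{2k} equals 4k² − 1, and for every integer k ≥ 1, the radio number of the middle graph M(P_{2k+1}) of the path P_{2k+1} equals 4k(k+1). -/
/-- The middle graph `M(P n)` of the path `P n`: vertices are
`v 1, …, v n` (encoded as even indices `0, 2, …, 2n-2`) together with
`v' 1, …, v' (n-1)` (encoded as odd indices `1, 3, …, 2n-3`), where
`v' i` corresponds to the edge `e i = v i v (i+1)`.  Two vertices are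
adjacent iff their indices differ by `1` (i.e. `v' i` is adjacent to
`v i` and `v (i+1)`), or they are both odd and differ by `2`
(i.e. `v' i` is adjacent to `v' (i+1)`). -/
def middlePath (n : ℕ) : SimpleGraph (Fin (2 * n - 1)) where
  Adj a b := ((a : ℕ) + 1 = (b : ℕ) ∨ (b : ℕ) + 1 = (a : ℕ)) ∨
    ((a : ℕ) % 2 = 1 ∧ (b : ℕ) % 2 = 1 ∧
      ((a : ℕ) + 2 = (b : ℕ) ∨ (b : ℕ) + 2 = (a : ℕ)))
  symm := by constructor; intro a b h; tauto
  loopless := by constructor; intro a h; rcases h with (h | h) | ⟨-, -, h | h⟩ <;> omega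

/-- `φ` is a radio labeling of `G`: distinct vertices `u, v` satisfy
`|φ u - φ v| ≥ diam G + 1 - d(u, v)`. -/
def IsRadioLabeling {V : Type*} (G : SimpleGraph V) (φ : V → ℕ) : Prop :=
  ∀ u v : V, u ≠ v → (G.diam : ℤ) + 1 ≤ (G.dist u v : ℤ) + |(φ u : ℤ) - (φ v : ℤ)|

/-- The span of a labeling `φ`: the maximum of `|φ u - φ v|` over all pairs. -/
def labelSpan {V : Type*} [Fintype V] (φ : V → ℕ) : ℕ :=
  Finset.univ.sup fun p : V × V => ((φ p.1 : ℤ) - (φ p.2 : ℤ)).natAbs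

/-- The radio number of `G`: the minimum span over all radio labelings. -/
noncomputable def radioNumber {V : Type*} [Fintype V] (G : SimpleGraph V) : ℕ :=
  sInf {s | ∃ φ : V → ℕ, IsRadioLabeling G φ ∧ labelSpan φ = s}

namespace RMP

/-- closed form for distance in `middlePath n` -/
def fml (a b : ℕ) : ℕ :=
  if a = b then 0
  else ((b - a) + (a - b) + 1) / 2 + (if a % 2 = 0 ∧ b % 2 = 0 then 1 else 0)

lemma fml_comm (a b : ℕ) : fml a b = fml b a := by
  unfold fml; split_ifs <;> omega

lemma exists_walk (n : ℕ) (hn : 2 ≤ n) :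
    ∀ D : ℕ, ∀ a b : Fin (2 * n - 1), (a : ℕ) ≤ b → (b : ℕ) - a = D →
      ∃ w : (middlePath n).Walk a b, w.length = fml a b := by
  intro D
  induction D using Nat.strong_induction_on with
  | _ D ih =>
    intro a b hab hD
    rcases Nat.eq_or_lt_of_le (Nat.zero_le D) with h0 | h0
    · obtain rfl : a = b := Fin.ext (by omega)
      exact ⟨SimpleGraph.Walk.nil, by simp [fml]⟩
    rcases Nat.lt_or_ge D 2 with h1 | h1
    · -- D = 1
      have hb : (b : ℕ) = (a : ℕ) + 1 := by omega
      have hadj : (middlePath n).Adj a b := Or.inl (Or.inl hb.symm)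
      refine ⟨SimpleGraph.Walk.cons hadj SimpleGraph.Walk.nil, ?_⟩
      simp only [SimpleGraph.Walk.length_cons, SimpleGraph.Walk.length_nil]
      unfold fml; split_ifs <;> omega
    · -- D ≥ 2
      have hblt : (b : ℕ) < 2 * n - 1 := b.isLt
      rcases Nat.even_or_odd (a : ℕ) with he | ho
      · -- a even : step to a+1
        set a' : Fin (2 * n - 1) := ⟨(a : ℕ) + 1, by omega⟩ with ha'
        have hadj : (middlePath n).Adj a a' := Or.inl (Or.inl rfl)
        obtain ⟨w, hw⟩ := ih (D - 1) (by omega) a' b (by simp [ha']; omega) (by simp [ha']; omega)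
        refine ⟨SimpleGraph.Walk.cons hadj w, ?_⟩
        simp only [SimpleGraph.Walk.length_cons, hw]
        have hav : (a' : ℕ) = (a : ℕ) + 1 := rfl
        have he' : (a : ℕ) % 2 = 0 := Nat.even_iff.mp he
        unfold fml; split_ifs <;> omega
      · -- a odd : step to a+2
        set a' : Fin (2 * n - 1) := ⟨(a : ℕ) + 2, by omega⟩ with ha'
        have ho' : (a : ℕ) % 2 = 1 := Nat.odd_iff.mp ho
        have hadj : (middlePath n).Adj a a' :=
          Or.inr ⟨ho', by show ((a : ℕ) + 2) % 2 = 1; omega, Or.inl rfl⟩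
        obtain ⟨w, hw⟩ := ih (D - 2) (by omega) a' b (by simp [ha']; omega) (by simp [ha']; omega)
        refine ⟨SimpleGraph.Walk.cons hadj w, ?_⟩
        simp only [SimpleGraph.Walk.length_cons, hw]
        have hav : (a' : ℕ) = (a : ℕ) + 2 := rfl
        unfold fml; split_ifs <;> omega

lemma fml_le_walk (n : ℕ) {a b : Fin (2 * n - 1)} (w : (middlePath n).Walk a b) :
    fml a b ≤ w.length := by
  induction w with
  | nil => simp [fml]
  | @cons u v b hadj p ih =>
    simp only [SimpleGraph.Walk.length_cons]
    have hfacts : ((u : ℕ) + 1 = (v : ℕ) ∨ (v : ℕ) + 1 = (u : ℕ)) ∨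
        ((u : ℕ) % 2 = 1 ∧ (v : ℕ) % 2 = 1 ∧
          ((u : ℕ) + 2 = (v : ℕ) ∨ (v : ℕ) + 2 = (u : ℕ))) := hadj
    have : fml u b ≤ fml v b + 1 := by
      unfold fml; split_ifs <;> omega
    omega

lemma dist_le_aux (n : ℕ) (hn : 2 ≤ n) (a b : Fin (2 * n - 1)) (hab : (a : ℕ) ≤ b) :
    (middlePath n).dist a b = fml a b := by
  obtain ⟨w, hw⟩ := exists_walk n hn ((b : ℕ) - a) a b hab rfl
  refine le_antisymm (hw ▸ SimpleGraph.dist_le w) ?_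
  obtain ⟨wm, hm⟩ := (SimpleGraph.Reachable.exists_walk_length_eq_dist ⟨w⟩)
  calc fml (a : ℕ) (b : ℕ) ≤ wm.length := fml_le_walk n wm
  _ = _ := hm

lemma dist_eq (n : ℕ) (hn : 2 ≤ n) (a b : Fin (2 * n - 1)) :
    (middlePath n).dist a b = fml a b := by
  rcases le_total (a : ℕ) (b : ℕ) with h | h
  · exact dist_le_aux n hn a b h
  · rw [SimpleGraph.dist_comm, fml_comm]; exact dist_le_aux n hn b a h

lemma diam_eq (n : ℕ) (hn : 2 ≤ n) : (middlePath n).diam = n := by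
  have hediam : (middlePath n).ediam = n := by
    apply le_antisymm
    · apply SimpleGraph.ediam_le_of_edist_le
      intro u v
      rcases eq_or_ne u v with rfl | huv
      · simp
      have hfml : ∀ x y : Fin (2 * n - 1), (x : ℕ) ≤ y → fml x y ≤ n := by
        intro x y hxy
        have := x.isLt; have := y.isLt
        unfold fml; split_ifs <;> omega
      rcases le_total (u : ℕ) (v : ℕ) with h | h
      · obtain ⟨w, hw⟩ := exists_walk n hn _ u v h rfl
        refine (SimpleGraph.edist_le w).trans ?_
        rw [hw]; exact_mod_cast Nat.cast_le.mpr (hfml u v h)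
      · obtain ⟨w, hw⟩ := exists_walk n hn _ v u h rfl
        rw [SimpleGraph.edist_comm]
        refine (SimpleGraph.edist_le w).trans ?_
        rw [hw]; exact_mod_cast Nat.cast_le.mpr (hfml v u h)
    · set u : Fin (2 * n - 1) := ⟨0, by omega⟩ with hu
      set v : Fin (2 * n - 1) := ⟨2 * n - 2, by omega⟩ with hv
      have h1 : (n : ℕ∞) ≤ (middlePath n).edist u v := by
        rw [SimpleGraph.edist_eq_sInf]
        refine le_sInf ?_
        rintro l ⟨w, rfl⟩
        have h2 : n ≤ fml (u : ℕ) (v : ℕ) := by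
          have : (u : ℕ) = 0 := rfl
          have : (v : ℕ) = 2 * n - 2 := rfl
          unfold fml; split_ifs <;> omega
        exact_mod_cast Nat.cast_le.mpr (h2.trans (fml_le_walk n w))
      exact h1.trans SimpleGraph.edist_le_ediam
  unfold SimpleGraph.diam
  rw [hediam]; simp


/-- the weight function used for the lower bound -/
def wgt (n v : ℕ) : ℕ :=
  if n % 2 = 0 then
    ((n - 1 - v) + (v - (n - 1))) + ((n - 1 - v) + (v - (n - 1))) % 2
  else if v < n then (n - v) + (n - v) % 2 - 1
  else if v = n then 1
  else (v - n) + (v - n) % 2 + 1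

lemma two_fml_le (n u v : ℕ) (hn : 2 ≤ n) (hu : u < 2 * n - 1) (hv : v < 2 * n - 1)
    (huv : u ≠ v) : 2 * fml u v ≤ wgt n u + wgt n v := by
  unfold fml wgt; split_ifs <;> omega

lemma wgt_pair (n u v : ℕ) (hn : 2 ≤ n) (huv : u ≠ v) : 2 ≤ wgt n u + wgt n v := by
  unfold wgt; split_ifs <;> omega

lemma sum_wgt : ∀ n, 2 ≤ n → ∑ v ∈ Finset.range (2 * n - 1), wgt n v = n * n := by
  intro n
  induction n using Nat.strong_induction_on with
  | _ n ih =>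
    intro hn
    match n, hn with
    | 2, _ => decide
    | 3, _ => decide
    | (m + 4), _ =>
      have IH := ih (m + 2) (by omega) (by omega)
      have e1 : 2 * (m + 4) - 1 = (2 * m + 5) + 1 + 1 := by omega
      rw [e1, Finset.sum_range_succ', Finset.sum_range_succ']
      have e2 : 2 * m + 5 = (2 * m + 3) + 1 + 1 := by omega
      rw [e2, Finset.sum_range_succ, Finset.sum_range_succ]
      have e3 : ∑ v ∈ Finset.range (2 * m + 3), wgt (m + 4) (v + 1 + 1)
          = ∑ v ∈ Finset.range (2 * m + 3), wgt (m + 2) v := by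
        refine Finset.sum_congr rfl fun v hv => ?_
        have hv' := Finset.mem_range.mp hv
        unfold wgt; split_ifs <;> omega
      rw [e3]
      have e4 : 2 * (m + 2) - 1 = 2 * m + 3 := by omega
      rw [e4] at IH
      rw [IH]
      have hb : wgt (m + 4) 0 + wgt (m + 4) (0 + 1) + wgt (m + 4) (2 * m + 3 + 1 + 1)
          + wgt (m + 4) (2 * m + 4 + 1 + 1) = 4 * m + 12 := by
        unfold wgt; split_ifs <;> omega
      have hr : (m + 4) * (m + 4) = (m + 2) * (m + 2) + (4 * m + 12) := by ring
      omega

lemma fml_le_n (n : ℕ) (hn : 2 ≤ n) (u v : ℕ) (hu : u < 2 * n - 1) (hv : v < 2 * n - 1) :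
    fml u v ≤ n := by
  unfold fml; split_ifs <;> omega

lemma one_le_fml (u v : ℕ) (huv : u ≠ v) : 1 ≤ fml u v := by
  unfold fml; split_ifs <;> omega

lemma lower_bound (n : ℕ) (hn : 2 ≤ n) (φ : Fin (2 * n - 1) → ℕ)
    (h : IsRadioLabeling (middlePath n) φ) : n * n - 1 ≤ labelSpan φ := by
  have hN : 3 ≤ 2 * n - 1 := by omega
  -- injectivity of φ
  have hinj : Function.Injective φ := by
    intro u v huv
    by_contra hne
    have hr := h u v hne
    rw [diam_eq n hn, dist_eq n hn] at hr
    have hf : fml (u : ℕ) (v : ℕ) ≤ n := fml_le_n n hn _ _ u.isLt v.isLt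
    rw [huv] at hr
    simp at hr
    omega
  set σ := Tuple.sort φ with hσ
  have hmono : Monotone (φ ∘ σ) := Tuple.monotone_sort φ
  have hsm : StrictMono (φ ∘ σ) := hmono.strictMono_of_injective (hinj.comp σ.injective)
  set x : ℕ → Fin (2 * n - 1) := fun p => σ ⟨p % (2 * n - 1), Nat.mod_lt _ (by omega)⟩ with hx
  have hxval : ∀ p (hp : p < 2 * n - 1), x p = σ ⟨p, hp⟩ := by
    intro p hp
    simp only [hx]
    congr 1
    exact Fin.ext (Nat.mod_eq_of_lt hp)
  have hxne : ∀ p q, p < 2 * n - 1 → q < 2 * n - 1 → p ≠ q → x p ≠ x q := by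
    intro p q hp hq hpq
    rw [hxval p hp, hxval q hq]
    intro hc
    exact hpq (Fin.mk.injEq .. ▸ (σ.injective hc))
  have hxlt : ∀ p q, p < q → q < 2 * n - 1 → φ (x p) < φ (x q) := by
    intro p q hpq hq
    rw [hxval p (by omega), hxval q hq]
    exact hsm (by simp [Fin.lt_def]; omega)
  -- telescoping
  have tele : ∑ p ∈ Finset.range (2 * n - 1 - 1), ((φ (x (p + 1)) : ℤ) - (φ (x p) : ℤ))
      = (φ (x (2 * n - 1 - 1)) : ℤ) - φ (x 0) :=
    Finset.sum_range_sub (fun p => (φ (x p) : ℤ)) (2 * n - 1 - 1)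
  -- sum of weights over all vertices through x
  have hfull : ∑ p ∈ Finset.range (2 * n - 1), wgt n (x p) = n * n := by
    calc ∑ p ∈ Finset.range (2 * n - 1), wgt n ((x p : ℕ))
        = ∑ i : Fin (2 * n - 1), wgt n ((x (i : ℕ) : ℕ)) :=
          (Fin.sum_univ_eq_sum_range (fun p => wgt n ((x p : ℕ))) (2 * n - 1)).symm
      _ = ∑ i : Fin (2 * n - 1), wgt n ((σ i : ℕ)) := by
          refine Finset.sum_congr rfl fun i _ => ?_
          rw [hxval _ i.isLt]
      _ = ∑ i : Fin (2 * n - 1), wgt n (i : ℕ) :=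
          Equiv.sum_comp σ (fun i => wgt n (i : ℕ))
      _ = ∑ v ∈ Finset.range (2 * n - 1), wgt n v :=
          Fin.sum_univ_eq_sum_range (fun v => wgt n v) (2 * n - 1)
      _ = n * n := sum_wgt n hn
  -- sum of consecutive distances
  set Sd := ∑ p ∈ Finset.range (2 * n - 1 - 1), (middlePath n).dist (x p) (x (p + 1)) with hSd
  have hSdle : 2 * Sd + 2 ≤ 2 * (n * n) := by
    have hterm : ∀ p ∈ Finset.range (2 * n - 1 - 1),
        2 * (middlePath n).dist (x p) (x (p + 1)) ≤ wgt n (x p) + wgt n (x (p + 1)) := by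
      intro p hp
      have hp' := Finset.mem_range.mp hp
      rw [dist_eq n hn]
      refine two_fml_le n _ _ hn (x p).isLt (x (p + 1)).isLt ?_
      have := hxne p (p + 1) (by omega) (by omega) (by omega)
      exact fun hc => this (Fin.ext hc)
    have hs : 2 * Sd ≤ ∑ p ∈ Finset.range (2 * n - 1 - 1), (wgt n (x p) + wgt n (x (p + 1))) := by
      rw [hSd, Finset.mul_sum]
      exact Finset.sum_le_sum hterm
    have hsplit : ∑ p ∈ Finset.range (2 * n - 1 - 1), (wgt n (x p) + wgt n (x (p + 1)))
        = (∑ p ∈ Finset.range (2 * n - 1 - 1), wgt n (x p))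
          + ∑ p ∈ Finset.range (2 * n - 1 - 1), wgt n (x (p + 1)) :=
      Finset.sum_add_distrib
    have h1 : (∑ p ∈ Finset.range (2 * n - 1 - 1), wgt n (x p)) + wgt n (x (2 * n - 1 - 1))
        = n * n := by
      rw [← Finset.sum_range_succ (fun p => wgt n (x p)) (2 * n - 1 - 1)]
      have : 2 * n - 1 - 1 + 1 = 2 * n - 1 := by omega
      rw [this, hfull]
    have h2 : (∑ p ∈ Finset.range (2 * n - 1 - 1), wgt n (x (p + 1))) + wgt n (x 0)
        = n * n := by
      have := Finset.sum_range_succ' (fun p => wgt n (x p)) (2 * n - 1 - 1)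
      have h21 : 2 * n - 1 - 1 + 1 = 2 * n - 1 := by omega
      rw [h21, hfull] at this
      omega
    have hend : 2 ≤ wgt n (x 0) + wgt n (x (2 * n - 1 - 1)) := by
      refine wgt_pair n _ _ hn ?_
      have := hxne 0 (2 * n - 1 - 1) (by omega) (by omega) (by omega)
      exact fun hc => this (Fin.ext hc)
    omega
  -- per-step radio inequality
  have hstep : ∀ p ∈ Finset.range (2 * n - 1 - 1),
      (n : ℤ) + 1 - ((middlePath n).dist (x p) (x (p + 1)) : ℤ)
        ≤ (φ (x (p + 1)) : ℤ) - (φ (x p) : ℤ) := by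
    intro p hp
    have hp' := Finset.mem_range.mp hp
    have hne : x (p + 1) ≠ x p := Ne.symm (hxne p (p + 1) (by omega) (by omega) (by omega))
    have hr := h (x (p + 1)) (x p) hne
    rw [diam_eq n hn] at hr
    rw [SimpleGraph.dist_comm] at hr
    have hlt : φ (x p) < φ (x (p + 1)) := hxlt p (p + 1) (by omega) (by omega)
    rw [abs_of_nonneg (by push_cast; omega)] at hr
    omega
  have hsum := Finset.sum_le_sum hstep
  rw [tele] at hsum
  have hL : ∑ p ∈ Finset.range (2 * n - 1 - 1),
      ((n : ℤ) + 1 - ((middlePath n).dist (x p) (x (p + 1)) : ℤ))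
      = (2 * n - 1 - 1 : ℕ) * ((n : ℤ) + 1) - (Sd : ℤ) := by
    rw [Finset.sum_sub_distrib, Finset.sum_const, Finset.card_range, hSd]
    push_cast
    ring
  rw [hL] at hsum
  -- conclude
  have hspan : ((φ (x (2 * n - 1 - 1)) : ℤ) - (φ (x 0) : ℤ)).natAbs ≤ labelSpan φ :=
    Finset.le_sup (f := fun p : Fin (2 * n - 1) × Fin (2 * n - 1) =>
      ((φ p.1 : ℤ) - (φ p.2 : ℤ)).natAbs) (Finset.mem_univ (x (2 * n - 1 - 1), x 0))
  have hcast : ((2 * n - 1 - 1 : ℕ) : ℤ) = 2 * (n : ℤ) - 2 := by push_cast; omega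
  have hprod : (2 * (n : ℤ) - 2) * ((n : ℤ) + 1) = 2 * ((n : ℤ) * n) - 2 := by ring
  have hnn : ((n * n : ℕ) : ℤ) = (n : ℤ) * n := by push_cast; ring
  rw [hcast, hprod] at hsum
  omega


/-- the ordering: position `p` ↦ vertex index; start at center `n-1`, then
alternate `n+i` / `i`. -/
def ordm (n p : ℕ) : ℕ :=
  if p = 0 then n - 1 else if p % 2 = 1 then n + p / 2 else p / 2 - 1

/-- inverse of `ordm` -/
def posm (n a : ℕ) : ℕ :=
  if a = n - 1 then 0 else if n ≤ a then 2 * (a - n) + 1 else 2 * a + 2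

/-- the label increment between consecutive positions -/
def gap (n p : ℕ) : ℕ :=
  if p = 0 then n
  else if p % 2 = 1 then
    (if n % 2 = 0 then n / 2 + 1 - (if (p / 2) % 2 = 0 then 1 else 0) else (n + 1) / 2)
  else
    (if n % 2 = 0 then n / 2 else (n + 1) / 2 - (if (p / 2) % 2 = 0 then 0 else 1))

def lab (n : ℕ) : ℕ → ℕ
  | 0 => 0
  | p + 1 => lab n p + gap n p

lemma lab_succ (n p : ℕ) : lab n (p + 1) = lab n p + gap n p := rfl

lemma ordm_zero (n : ℕ) : ordm n 0 = n - 1 := by simp [ordm]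

lemma ordm_odd (n p : ℕ) (hp : p % 2 = 1) : ordm n p = n + p / 2 := by
  unfold ordm; split_ifs <;> first | contradiction | omega

lemma ordm_even (n p : ℕ) (hp : p ≠ 0) (hp2 : p % 2 = 0) : ordm n p = p / 2 - 1 := by
  unfold ordm; split_ifs <;> first | contradiction | omega

lemma ordm_lt (n p : ℕ) (hn : 2 ≤ n) (hp : p < 2 * n - 1) : ordm n p < 2 * n - 1 := by
  unfold ordm; split_ifs <;> first | contradiction | omega

lemma posm_lt (n a : ℕ) (hn : 2 ≤ n) (ha : a < 2 * n - 1) : posm n a < 2 * n - 1 := by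
  unfold posm; split_ifs <;> first | contradiction | omega

lemma ordm_posm (n a : ℕ) (hn : 2 ≤ n) (ha : a < 2 * n - 1) : ordm n (posm n a) = a := by
  rcases eq_or_ne a (n - 1) with rfl | h1
  · simp [posm, ordm]
  rcases le_or_gt n a with h2 | h2
  · have hp : posm n a = 2 * (a - n) + 1 := by unfold posm; split_ifs <;> first | contradiction | omega
    rw [hp, ordm_odd n _ (by omega)]; omega
  · have hp : posm n a = 2 * a + 2 := by unfold posm; split_ifs <;> first | contradiction | omega
    rw [hp, ordm_even n _ (by omega) (by omega)]; omega

lemma posm_ordm (n p : ℕ) (hn : 2 ≤ n) (hp : p < 2 * n - 1) : posm n (ordm n p) = p := by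
  rcases eq_or_ne p 0 with rfl | h0
  · simp [ordm, posm]
  rcases Nat.even_or_odd p with he | ho
  · have he' := Nat.even_iff.mp he
    rw [ordm_even n p h0 he']
    unfold posm; split_ifs <;> first | contradiction | omega
  · have ho' := Nat.odd_iff.mp ho
    rw [ordm_odd n p ho']
    unfold posm; split_ifs <;> first | contradiction | omega

lemma gap_pos (n p : ℕ) (hn : 2 ≤ n) : 1 ≤ gap n p := by
  unfold gap; split_ifs <;> first | contradiction | omega

lemma gap_two (n p : ℕ) (hn : 2 ≤ n) : n ≤ gap n p + gap n (p + 1) := by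
  unfold gap; split_ifs <;> first | contradiction | omega

lemma consec (n p : ℕ) (hn : 2 ≤ n) (hp : p + 1 < 2 * n - 1) :
    n + 1 ≤ fml (ordm n p) (ordm n (p + 1)) + gap n p := by
  rcases eq_or_ne p 0 with rfl | h0
  · rw [ordm_zero, ordm_odd n 1 (by omega)]
    unfold fml gap; split_ifs <;> first | contradiction | omega
  rcases Nat.even_or_odd p with he | ho
  · have he' := Nat.even_iff.mp he
    rw [ordm_even n p h0 he', ordm_odd n (p + 1) (by omega)]
    unfold fml gap; split_ifs <;> first | contradiction | omega
  · have ho' := Nat.odd_iff.mp ho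
    rw [ordm_odd n p ho', ordm_even n (p + 1) (by omega) (by omega)]
    unfold fml gap; split_ifs <;> first | contradiction | omega

lemma lab_mono (n : ℕ) {p q : ℕ} (h : p ≤ q) : lab n p ≤ lab n q :=
  monotone_nat_of_le_succ (fun p => by rw [lab_succ]; omega) h

lemma lab_two (n : ℕ) (hn : 2 ≤ n) {p q : ℕ} (h : p + 2 ≤ q) : lab n p + n ≤ lab n q := by
  have h1 : lab n (p + 2) ≤ lab n q := lab_mono n h
  have h2 : lab n (p + 2) = lab n p + gap n p + gap n (p + 1) := by
    rw [show p + 2 = (p + 1) + 1 from rfl, lab_succ, lab_succ]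
  have := gap_two n p hn
  omega

lemma gap_pair (n i : ℕ) (hn : 2 ≤ n) :
    gap n (2 * i + 1) + gap n (2 * i + 2) = n + i % 2 := by
  unfold gap; split_ifs <;> first | contradiction | omega

lemma lab_odd (n : ℕ) (hn : 2 ≤ n) : ∀ i, lab n (2 * i + 1) + (i + 1) / 2 = n + i * (n + 1) := by
  intro i
  induction i with
  | zero => simp [lab_succ, lab, gap]
  | succ i ih =>
    have e1 : lab n (2 * (i + 1) + 1) = lab n (2 * i + 1) + (gap n (2 * i + 1) + gap n (2 * i + 2)) := by
      have h1 : 2 * (i + 1) + 1 = (2 * i + 2) + 1 := by ring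
      have h2 : 2 * i + 2 = (2 * i + 1) + 1 := rfl
      rw [h1, lab_succ, h2, lab_succ]
      ring
    rw [e1, gap_pair n i hn]
    have hr : (i + 1) * (n + 1) = i * (n + 1) + (n + 1) := by ring
    omega

lemma lab_last (n : ℕ) (hn : 2 ≤ n) : lab n (2 * n - 2) = n * n - 1 := by
  obtain ⟨m, rfl⟩ : ∃ m, n = m + 2 := ⟨n - 2, by omega⟩
  have e1 : lab (m + 2) (2 * (m + 2) - 2) = lab (m + 2) (2 * m + 1) + gap (m + 2) (2 * m + 1) := by
    have h1 : 2 * (m + 2) - 2 = (2 * m + 1) + 1 := by omega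
    rw [h1, lab_succ]
  rw [e1]
  have h2 := lab_odd (m + 2) hn m
  have hg : gap (m + 2) (2 * m + 1) + (m + 1) / 2 = m + 1 + m % 2 := by
    unfold gap; split_ifs <;> first | contradiction | omega
  have hr1 : m * (m + 2 + 1) = m * m + 3 * m := by ring
  have hr2 : (m + 2) * (m + 2) = m * m + 4 * m + 4 := by ring
  omega

/-- the optimal labeling -/
def phi (n : ℕ) : Fin (2 * n - 1) → ℕ := fun v => lab n (posm n (v : ℕ))

lemma phi_radio (n : ℕ) (hn : 2 ≤ n) : IsRadioLabeling (middlePath n) (phi n) := by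
  have aux : ∀ u v : Fin (2 * n - 1), posm n u < posm n v →
      (n : ℤ) + 1 ≤ ((middlePath n).dist u v : ℤ) + |(phi n u : ℤ) - (phi n v : ℤ)| := by
    intro u v hpq
    have hpl : posm n (u : ℕ) < 2 * n - 1 := posm_lt n _ hn u.isLt
    have hql : posm n (v : ℕ) < 2 * n - 1 := posm_lt n _ hn v.isLt
    have hu : ordm n (posm n (u : ℕ)) = (u : ℕ) := ordm_posm n _ hn u.isLt
    have hv : ordm n (posm n (v : ℕ)) = (v : ℕ) := ordm_posm n _ hn v.isLt
    have hlt : lab n (posm n (u : ℕ)) < lab n (posm n (v : ℕ)) := by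
      have h1 : lab n (posm n (u : ℕ) + 1) ≤ lab n (posm n (v : ℕ)) := lab_mono n (by omega)
      have h2 := gap_pos n (posm n (u : ℕ)) hn
      rw [lab_succ] at h1
      omega
    have habs : |(phi n u : ℤ) - (phi n v : ℤ)|
        = (lab n (posm n (v : ℕ)) : ℤ) - lab n (posm n (u : ℕ)) := by
      unfold phi
      rw [abs_sub_comm, abs_of_nonneg (by push_cast; omega)]
    rw [habs, dist_eq n hn]
    rcases eq_or_ne (posm n (v : ℕ)) (posm n (u : ℕ) + 1) with he | hne2
    · have hc := consec n (posm n (u : ℕ)) hn (by omega)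
      rw [hu, ← he, hv] at hc
      have hl : lab n (posm n (v : ℕ)) = lab n (posm n (u : ℕ)) + gap n (posm n (u : ℕ)) := by
        rw [he, lab_succ]
      push_cast
      omega
    · have hl := lab_two n hn (show posm n (u : ℕ) + 2 ≤ posm n (v : ℕ) by omega)
      have hf : 1 ≤ fml (u : ℕ) (v : ℕ) := by
        refine one_le_fml _ _ fun hc => ?_
        have : posm n (u : ℕ) = posm n (v : ℕ) := by rw [hc]
        omega
      push_cast
      omega
  intro u v huv
  have hne : posm n (u : ℕ) ≠ posm n (v : ℕ) := by
    intro hc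
    apply huv
    apply Fin.ext
    rw [← ordm_posm n _ hn u.isLt, ← ordm_posm n _ hn v.isLt, hc]
  rw [diam_eq n hn]
  rcases lt_or_gt_of_ne hne with h | h
  · exact aux u v h
  · rw [SimpleGraph.dist_comm, abs_sub_comm]
    exact aux v u h

lemma phi_span (n : ℕ) (hn : 2 ≤ n) : labelSpan (phi n) = n * n - 1 := by
  apply le_antisymm
  · apply Finset.sup_le
    intro pr _
    have b1 : ∀ w : Fin (2 * n - 1), phi n w ≤ n * n - 1 := by
      intro w
      show lab n (posm n (w : ℕ)) ≤ n * n - 1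
      calc lab n (posm n (w : ℕ)) ≤ lab n (2 * n - 2) :=
            lab_mono n (by have := posm_lt n _ hn w.isLt; omega)
        _ = n * n - 1 := lab_last n hn
    have h1 := b1 pr.1
    have h2 := b1 pr.2
    omega
  · have ha : phi n ⟨ordm n (2 * n - 2), ordm_lt n _ hn (by omega)⟩ = n * n - 1 := by
      show lab n (posm n (ordm n (2 * n - 2))) = _
      rw [posm_ordm n _ hn (by omega), lab_last n hn]
    have hb : phi n ⟨ordm n 0, ordm_lt n _ hn (by omega)⟩ = 0 := by
      show lab n (posm n (ordm n 0)) = _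
      rw [posm_ordm n _ hn (by omega)]
      rfl
    have hle := Finset.le_sup (f := fun pr : Fin (2 * n - 1) × Fin (2 * n - 1) =>
        ((phi n pr.1 : ℤ) - (phi n pr.2 : ℤ)).natAbs)
      (Finset.mem_univ (⟨ordm n (2 * n - 2), ordm_lt n _ hn (by omega)⟩,
        ⟨ordm n 0, ordm_lt n _ hn (by omega)⟩))
    beta_reduce at hle
    rw [ha, hb] at hle
    unfold labelSpan
    refine le_trans (le_of_eq ?_) hle
    omega

lemma radio_main (n : ℕ) (hn : 2 ≤ n) : radioNumber (middlePath n) = n * n - 1 := by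
  have hmem : n * n - 1 ∈ {s | ∃ φ : Fin (2 * n - 1) → ℕ,
      IsRadioLabeling (middlePath n) φ ∧ labelSpan φ = s} :=
    ⟨phi n, phi_radio n hn, phi_span n hn⟩
  refine le_antisymm (Nat.sInf_le hmem) (le_csInf ⟨_, hmem⟩ ?_)
  rintro s ⟨ψ, hψ, rfl⟩
  exact lower_bound n hn ψ hψ

end RMP

/-- For every `k ≥ 1`, the radio number of the middle graph of the path `P (2k)`
is `4k² - 1`, and the radio number of the middle graph of `P (2k+1)` is `4k(k+1)`. -/
theorem radioNumber_middlePath (k : ℕ) (hk : 1 ≤ k) :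
    radioNumber (middlePath (2 * k)) = 4 * k ^ 2 - 1 ∧
    radioNumber (middlePath (2 * k + 1)) = 4 * k * (k + 1) := by
  constructor
  · rw [RMP.radio_main (2 * k) (by omega)]
    have : 2 * k * (2 * k) = 4 * k ^ 2 := by ring
    omega
  · rw [RMP.radio_main (2 * k + 1) (by omega)]
    have : (2 * k + 1) * (2 * k + 1) = 4 * k * (k + 1) + 1 := by ring
    omega
end

section
/- For every integer k ≥ 1, the radio number of the middle graph M(P_{2k}) of the path P_{2k} is at most 4k² − 1, and for every integer k ≥ 1, the radio number of the middle graph M(P_{2k+1}) of the path P_{2k+1} is at most 4k(k+1). -/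
def Dn (a b : ℕ) : ℕ :=
  if a = b then 0
  else if ((a - b) + (b - a)) % 2 = 1 then ((a - b) + (b - a) + 1) / 2
  else if a % 2 = 1 then ((a - b) + (b - a)) / 2
  else ((a - b) + (b - a)) / 2 + 1
lemma Dn_comm (a b : ℕ) : Dn a b = Dn b a := by unfold Dn; split_ifs <;> omega
lemma Dn_pos {a b : ℕ} (h : a ≠ b) : 1 ≤ Dn a b := by unfold Dn; split_ifs <;> omega
lemma Dn_le_n {n a b : ℕ} (ha : a < 2*n - 1) (hb : b < 2*n - 1) : Dn a b ≤ n := by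
  unfold Dn; split_ifs <;> omega
lemma Dn_adj_step (a c b : ℕ)
    (h : (a + 1 = c ∨ c + 1 = a) ∨ (a % 2 = 1 ∧ c % 2 = 1 ∧ (a + 2 = c ∨ c + 2 = a))) :
    Dn a b ≤ Dn c b + 1 := by
  unfold Dn; split_ifs <;> omega
lemma middlePath_adj {n : ℕ} {a b : Fin (2*n-1)}
    (h : ((a : ℕ) + 1 = (b : ℕ) ∨ (b : ℕ) + 1 = (a : ℕ)) ∨
      ((a : ℕ) % 2 = 1 ∧ (b : ℕ) % 2 = 1 ∧
        ((a : ℕ) + 2 = (b : ℕ) ∨ (b : ℕ) + 2 = (a : ℕ)))) : (middlePath n).Adj a b := h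
lemma walk_lb {n : ℕ} {a b : Fin (2*n-1)} (p : (middlePath n).Walk a b) :
    Dn a b ≤ p.length := by
  induction p with
  | nil => simp [Dn]
  | @cons u v w h p ih =>
      rw [SimpleGraph.Walk.length_cons]
      exact le_trans (Dn_adj_step (u : ℕ) (v : ℕ) (w : ℕ) h) (by omega)
lemma exists_walk_aux {n : ℕ} : ∀ (m : ℕ) (a b : Fin (2*n-1)),
    ((a:ℕ) - b) + ((b:ℕ) - a) ≤ m → ∃ p : (middlePath n).Walk a b, p.length ≤ Dn a b := by
  intro m
  induction m with
  | zero =>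
      intro a b h
      have : a = b := Fin.ext (by omega)
      subst this
      exact ⟨SimpleGraph.Walk.nil, by simp [Dn]⟩
  | succ m ih =>
      intro a b h
      by_cases hab : (a : ℕ) = (b : ℕ)
      · have : a = b := Fin.ext hab
        subst this
        exact ⟨SimpleGraph.Walk.nil, by simp [Dn]⟩
      have build : ∀ c : Fin (2*n-1), (middlePath n).Adj a c →
          (((c:ℕ) - b) + ((b:ℕ) - c) ≤ m) → (Dn (c:ℕ) (b:ℕ) + 1 ≤ Dn a b) →
          ∃ p : (middlePath n).Walk a b, p.length ≤ Dn a b := by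
        intro c hadj hm hstep
        obtain ⟨p, hp⟩ := ih c b hm
        exact ⟨SimpleGraph.Walk.cons hadj p, by rw [SimpleGraph.Walk.length_cons]; omega⟩
      rcases Nat.lt_or_ge (a : ℕ) (b : ℕ) with hlt | hge
      · by_cases h2 : (a : ℕ) % 2 = 1 ∧ (a : ℕ) + 2 ≤ (b : ℕ)
        · obtain ⟨c, hcval⟩ : ∃ c : Fin (2*n-1), (c:ℕ) = (a:ℕ)+2 := ⟨⟨_, by omega⟩, rfl⟩
          refine build c (middlePath_adj (Or.inr ⟨h2.1, by omega, Or.inl (by omega)⟩))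
            (by omega) ?_
          rw [hcval]; unfold Dn; split_ifs <;> omega
        · obtain ⟨c, hcval⟩ : ∃ c : Fin (2*n-1), (c:ℕ) = (a:ℕ)+1 := ⟨⟨_, by omega⟩, rfl⟩
          refine build c (middlePath_adj (Or.inl (Or.inl (by omega)))) (by omega) ?_
          rw [hcval]; unfold Dn; split_ifs <;> omega
      · by_cases h2 : (a : ℕ) % 2 = 1 ∧ (b : ℕ) + 2 ≤ (a : ℕ)
        · obtain ⟨c, hcval⟩ : ∃ c : Fin (2*n-1), (c:ℕ) = (a:ℕ)-2 := ⟨⟨_, by omega⟩, rfl⟩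
          refine build c (middlePath_adj (Or.inr ⟨h2.1, by omega, Or.inr (by omega)⟩))
            (by omega) ?_
          rw [hcval]; unfold Dn; split_ifs <;> omega
        · obtain ⟨c, hcval⟩ : ∃ c : Fin (2*n-1), (c:ℕ) = (a:ℕ)-1 := ⟨⟨_, by omega⟩, rfl⟩
          refine build c (middlePath_adj (Or.inl (Or.inr (by omega)))) (by omega) ?_
          rw [hcval]; unfold Dn; split_ifs <;> omega
lemma exists_walk {n : ℕ} (a b : Fin (2*n-1)) :
    ∃ p : (middlePath n).Walk a b, p.length ≤ Dn a b :=
  exists_walk_aux (((a:ℕ) - b) + ((b:ℕ) - a)) a b le_rfl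
lemma middlePath_diam_le (n : ℕ) : (middlePath n).diam ≤ n := by
  have hed : (middlePath n).ediam ≤ (n : ℕ∞) := by
    rw [SimpleGraph.ediam_def]
    refine iSup_le fun p => ?_
    obtain ⟨w, hw⟩ := exists_walk p.1 p.2
    refine le_trans (SimpleGraph.edist_le w) ?_
    exact_mod_cast Nat.cast_le.mpr (le_trans hw (Dn_le_n p.1.isLt p.2.isLt))
  calc (middlePath n).diam = (middlePath n).ediam.toNat := rfl
    _ ≤ (n : ℕ∞).toNat := ENat.toNat_le_toNat hed (by simp)
    _ = n := by simp
lemma middlePath_dist_ge {n : ℕ} (a b : Fin (2*n-1)) :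
    Dn a b ≤ (middlePath n).dist a b := by
  obtain ⟨w, -⟩ := exists_walk a b
  obtain ⟨p, hp⟩ := SimpleGraph.Reachable.exists_walk_length_eq_dist ⟨w⟩
  exact hp ▸ walk_lb p
def phiE (k v : ℕ) : ℕ :=
  if v = 2*k-1 then 0
  else if v < 2*k then 3*k + 2*k*v + (v+1)/2
  else 2*k + 2*k*(v-2*k) + (v-2*k)/2
def phiO (k v : ℕ) : ℕ :=
  if v = 2*k-1 then 0
  else if v = 2*k then 4*k*k + 4*k
  else if v < 2*k then 3*k+2 + (2*k+1)*v + v/2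
  else (2*k+1)*(v-2*k) + (v-2*k-1)/2
lemma sq_idE (k : ℕ) (hk : 1 ≤ k) : 2*k*(2*k-2) + 4*k = 4*k*k := by
  obtain ⟨j, rfl⟩ : ∃ j, k = j+1 := ⟨k-1, by omega⟩
  rw [show 2*(j+1)-2 = 2*j from by omega]; ring
lemma sq_idO1 (k : ℕ) (hk : 1 ≤ k) : (2*k+1)*(2*k-2) + (2*k+2) = 4*k*k := by
  obtain ⟨j, rfl⟩ : ∃ j, k = j+1 := ⟨k-1, by omega⟩
  rw [show 2*(j+1)-2 = 2*j from by omega]; ring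
lemma sq_idO2 (k : ℕ) (hk : 1 ≤ k) : (2*k+1)*(2*k-1) + 1 = 4*k*k := by
  obtain ⟨j, rfl⟩ : ∃ j, k = j+1 := ⟨k-1, by omega⟩
  rw [show 2*(j+1)-1 = 2*j+1 from by omega]; ring
lemma sq_idO3 (k : ℕ) : (2*k+1)*(2*k) = 4*k*k + 2*k := by ring
lemma phiE_le (k v : ℕ) (hk : 1 ≤ k) (hv : v < 4*k-1) : phiE k v ≤ 4*k*k - 1 := by
  have h4 := sq_idE k hk
  unfold phiE; split_ifs with h1 h2
  · omega
  · have hm : 2*k*v ≤ 2*k*(2*k-2) := Nat.mul_le_mul_left _ (by omega)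
    omega
  · have hm : 2*k*(v-2*k) ≤ 2*k*(2*k-2) := Nat.mul_le_mul_left _ (by omega)
    omega
lemma phiO_le (k v : ℕ) (hk : 1 ≤ k) (hv : v < 4*k+1) : phiO k v ≤ 4*k*k + 4*k := by
  have h1 := sq_idO1 k hk
  have h3 := sq_idO3 k
  unfold phiO; split_ifs with ha hb hc
  · omega
  · omega
  · have hm : (2*k+1)*v ≤ (2*k+1)*(2*k-2) := Nat.mul_le_mul_left _ (by omega)
    omega
  · have hm : (2*k+1)*(v-2*k) ≤ (2*k+1)*(2*k) := Nat.mul_le_mul_left _ (by omega)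
    omega
lemma phiO_A (k : ℕ) : phiO k (2*k-1) = 0 := by unfold phiO; rw [if_pos rfl]
lemma phiO_B (k : ℕ) (hk : 1 ≤ k) : phiO k (2*k) = 4*k*k + 4*k := by
  unfold phiO; rw [if_neg (by omega), if_pos rfl]
lemma phiO_L (k v : ℕ) (hk : 1 ≤ k) (h : v < 2*k-1) :
    phiO k v = 3*k+2 + (2*k+1)*v + v/2 := by
  unfold phiO; rw [if_neg (by omega), if_neg (by omega), if_pos (by omega)]
lemma phiO_H (k i : ℕ) (hk : 1 ≤ k) :
    phiO k (2*k+1+i) = (2*k+1)*(i+1) + i/2 := by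
  unfold phiO
  rw [if_neg (by omega), if_neg (by omega), if_neg (by omega),
    show 2*k+1+i-(2*k) = i+1 from by omega, Nat.add_sub_cancel]
lemma keyO' (k u v : ℕ) (hk : 1 ≤ k) (hv : v < 4*k+1) (hlt : u < v) :
    2*k+2 ≤ Dn u v + ((phiO k u - phiO k v) + (phiO k v - phiO k u)) := by
  rcases Nat.lt_trichotomy u (2*k-1) with hu1 | hu1 | hu1
  · -- u ∈ L
    rcases Nat.lt_trichotomy v (2*k-1) with hv1 | hv1 | hv1
    · -- L-L
      rw [phiO_L k u hk hu1, phiO_L k v hk hv1]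
      have hm : (2*k+1)*u + (2*k+1) ≤ (2*k+1)*v := by
        have := Nat.mul_le_mul_left (2*k+1) (show u+1 ≤ v from hlt)
        rwa [Nat.mul_succ] at this
      unfold Dn; split_ifs <;> omega
    · -- L-A
      rw [phiO_L k u hk hu1, hv1, phiO_A k]
      unfold Dn; split_ifs <;> omega
    · rcases Nat.eq_or_lt_of_le (show 2*k ≤ v from by omega) with hv2 | hv2
      · -- L-B
        rw [phiO_L k u hk hu1, ← hv2, phiO_B k hk]
        have hm : (2*k+1)*u ≤ (2*k+1)*(2*k-2) := Nat.mul_le_mul_left _ (by omega)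
        have hid := sq_idO1 k hk
        unfold Dn; split_ifs <;> omega
      · -- L-H
        obtain ⟨i, rfl⟩ : ∃ i, v = 2*k+1 + i := ⟨v - (2*k+1), by omega⟩
        rw [phiO_L k u hk hu1, phiO_H k i hk]
        rcases Nat.lt_trichotomy i u with hiu | rfl | hiu
        · have hm : (2*k+1)*(i+1) ≤ (2*k+1)*u := Nat.mul_le_mul_left _ (by omega)
          unfold Dn; split_ifs <;> omega
        · have hm : (2*k+1)*(i+1) = (2*k+1)*i + (2*k+1) := Nat.mul_succ _ _
          unfold Dn; split_ifs <;> omega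
        · rcases Nat.lt_or_ge i (u+2) with hiu2 | hiu2
          · have : i = u + 1 := by omega
            subst this
            have hm : (2*k+1)*(u+1+1) = (2*k+1)*u + (2*k+1)*2 := by ring
            unfold Dn; split_ifs <;> omega
          · have hm : (2*k+1)*u + (2*k+1)*3 ≤ (2*k+1)*(i+1) := by
              have := Nat.mul_le_mul_left (2*k+1) (show u+3 ≤ i+1 from by omega)
              rwa [Nat.mul_add] at this
            unfold Dn; split_ifs <;> omega
  · -- u = A
    subst hu1
    rw [phiO_A k]
    rcases Nat.eq_or_lt_of_le (show 2*k ≤ v from by omega) with hv2 | hv2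
    · -- A-B
      rw [← hv2, phiO_B k hk]
      have hsq : 1 ≤ 4*k*k := by nlinarith
      unfold Dn; split_ifs <;> omega
    · -- A-H
      obtain ⟨i, rfl⟩ : ∃ i, v = 2*k+1 + i := ⟨v - (2*k+1), by omega⟩
      rw [phiO_H k i hk]
      rcases Nat.eq_zero_or_pos i with rfl | hi
      · unfold Dn; split_ifs <;> omega
      · have hm : (2*k+1)*2 ≤ (2*k+1)*(i+1) := Nat.mul_le_mul_left _ (by omega)
        unfold Dn; split_ifs <;> omega
  · -- u ≥ 2k
    rcases Nat.eq_or_lt_of_le (show 2*k ≤ u from by omega) with hu2 | hu2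
    · -- u = B
      rw [← hu2, phiO_B k hk]
      obtain ⟨i, rfl⟩ : ∃ i, v = 2*k+1 + i := ⟨v - (2*k+1), by omega⟩
      rw [phiO_H k i hk]
      rcases Nat.lt_or_ge i (2*k-1) with hi | hi
      · have hm : (2*k+1)*(i+1) ≤ (2*k+1)*(2*k-1) := Nat.mul_le_mul_left _ (by omega)
        have hid := sq_idO2 k hk
        unfold Dn; split_ifs <;> omega
      · -- i = 2k-1, v = 4k
        have : i = 2*k-1 := by omega
        subst this
        rw [show 2*k-1+1 = 2*k from by omega]
        have hid := sq_idO3 k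
        unfold Dn; split_ifs <;> omega
    · -- H-H
      obtain ⟨i, rfl⟩ : ∃ i, u = 2*k+1 + i := ⟨u - (2*k+1), by omega⟩
      obtain ⟨j, rfl⟩ : ∃ j, v = 2*k+1 + j := ⟨v - (2*k+1), by omega⟩
      rw [phiO_H k i hk, phiO_H k j hk]
      have hm : (2*k+1)*(i+1) + (2*k+1) ≤ (2*k+1)*(j+1) := by
        have := Nat.mul_le_mul_left (2*k+1) (show i+1+1 ≤ j+1 from by omega)
        rwa [Nat.mul_succ] at this
      unfold Dn; split_ifs <;> omega
lemma keyO (k u v : ℕ) (hk : 1 ≤ k) (hu : u < 4*k+1) (hv : v < 4*k+1) (huv : u ≠ v) :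
    2*k+2 ≤ Dn u v + ((phiO k u - phiO k v) + (phiO k v - phiO k u)) := by
  rcases Nat.lt_or_ge u v with h | h
  · exact keyO' k u v hk hv h
  · have := keyO' k v u hk hu (by omega)
    rw [Dn_comm] at this
    omega

lemma phiE_L (k v : ℕ) (hk : 1 ≤ k) (h : v < 2*k-1) :
    phiE k v = 3*k + 2*k*v + (v+1)/2 := by
  unfold phiE; rw [if_neg (by omega), if_pos (by omega)]
lemma phiE_A (k : ℕ) : phiE k (2*k-1) = 0 := by
  unfold phiE; rw [if_pos rfl]
lemma phiE_H (k i : ℕ) (hk : 1 ≤ k) :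
    phiE k (2*k+i) = 2*k + 2*k*i + i/2 := by
  unfold phiE; rw [if_neg (by omega), if_neg (by omega),
    show 2*k+i-(2*k) = i from by omega]
lemma keyE' (k u v : ℕ) (hk : 1 ≤ k) (hv : v < 4*k-1) (hlt : u < v) :
    2*k+1 ≤ Dn u v + ((phiE k u - phiE k v) + (phiE k v - phiE k u)) := by
  rcases Nat.lt_trichotomy u (2*k-1) with hu1 | hu1 | hu1
  · -- u ∈ L
    rcases Nat.lt_trichotomy v (2*k-1) with hv1 | hv1 | hv1
    · -- L-L
      rw [phiE_L k u hk hu1, phiE_L k v hk hv1]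
      have hm : 2*k*u + 2*k ≤ 2*k*v := by
        have := Nat.mul_le_mul_left (2*k) (show u+1 ≤ v from hlt)
        rwa [Nat.mul_succ] at this
      unfold Dn; split_ifs <;> omega
    · -- L-A
      rw [phiE_L k u hk hu1, hv1, phiE_A k]
      unfold Dn; split_ifs <;> omega
    · -- L-H
      obtain ⟨i, rfl⟩ : ∃ i, v = 2*k + i := ⟨v - 2*k, by omega⟩
      rw [phiE_L k u hk hu1, phiE_H k i hk]
      rcases Nat.lt_trichotomy i u with hiu | rfl | hiu
      · have hm : 2*k*i + 2*k ≤ 2*k*u := by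
          have := Nat.mul_le_mul_left (2*k) (show i+1 ≤ u from hiu)
          rwa [Nat.mul_succ] at this
        unfold Dn; split_ifs <;> omega
      · unfold Dn; split_ifs <;> omega
      · rcases Nat.lt_or_ge i (u+2) with hiu2 | hiu2
        · -- i = u+1
          have : i = u + 1 := by omega
          subst this
          have hm : 2*k*(u+1) = 2*k*u + 2*k := Nat.mul_succ _ _
          unfold Dn; split_ifs <;> omega
        · have hm : 2*k*u + 2*k*2 ≤ 2*k*i := by
            have := Nat.mul_le_mul_left (2*k) (show u+2 ≤ i from hiu2)
            rwa [Nat.mul_add] at this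
          unfold Dn; split_ifs <;> omega
  · -- u = A
    subst hu1
    obtain ⟨i, rfl⟩ : ∃ i, v = 2*k + i := ⟨v - 2*k, by omega⟩
    rw [phiE_A k, phiE_H k i hk]
    rcases Nat.eq_zero_or_pos i with rfl | hi
    · unfold Dn; split_ifs <;> omega
    · have hm : 2*k*1 ≤ 2*k*i := Nat.mul_le_mul_left _ hi
      unfold Dn; split_ifs <;> omega
  · -- u ∈ H
    obtain ⟨i, rfl⟩ : ∃ i, u = 2*k + i := ⟨u - 2*k, by omega⟩
    obtain ⟨j, rfl⟩ : ∃ j, v = 2*k + j := ⟨v - 2*k, by omega⟩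
    rw [phiE_H k i hk, phiE_H k j hk]
    have hm : 2*k*i + 2*k ≤ 2*k*j := by
      have := Nat.mul_le_mul_left (2*k) (show i+1 ≤ j from by omega)
      rwa [Nat.mul_succ] at this
    unfold Dn; split_ifs <;> omega
lemma keyE (k u v : ℕ) (hk : 1 ≤ k) (hu : u < 4*k-1) (hv : v < 4*k-1) (huv : u ≠ v) :
    2*k+1 ≤ Dn u v + ((phiE k u - phiE k v) + (phiE k v - phiE k u)) := by
  rcases Nat.lt_or_ge u v with h | h
  · exact keyE' k u v hk hv h
  · have := keyE' k v u hk hu (by omega)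
    rw [Dn_comm] at this
    omega

lemma abs_sub_natCast (a b : ℕ) : |(a:ℤ) - b| = (((a - b) + (b - a) : ℕ) : ℤ) := by
  rcases Nat.le_total a b with h | h
  · rw [abs_of_nonpos (by omega)]; omega
  · rw [abs_of_nonneg (by omega)]; omega

/-- For every `k ≥ 1`, the radio number of the middle graph of the path `P (2k)`
is at most `4k² - 1`, and the radio number of the middle graph of `P (2k+1)` is
at most `4k(k+1)`. -/
theorem radioNumber_middlePath_upper (k : ℕ) (hk : 1 ≤ k) :
    radioNumber (middlePath (2 * k)) ≤ 4 * k ^ 2 - 1 ∧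
    radioNumber (middlePath (2 * k + 1)) ≤ 4 * k * (k + 1) := by
  constructor
  · -- even case
    rw [show 4 * k ^ 2 - 1 = 4*k*k - 1 from by ring_nf]
    set φ : Fin (2 * (2*k) - 1) → ℕ := fun w => phiE k (w : ℕ) with hφ
    have hlab : IsRadioLabeling (middlePath (2*k)) φ := by
      intro u v huv
      have hval : (u:ℕ) ≠ (v:ℕ) := fun h => huv (Fin.ext h)
      have h1 : (middlePath (2*k)).diam ≤ 2*k := middlePath_diam_le _
      have h2 : Dn (u:ℕ) (v:ℕ) ≤ (middlePath (2*k)).dist u v := middlePath_dist_ge u v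
      have h3 := keyE k (u:ℕ) (v:ℕ) hk (by have := u.isLt; omega) (by have := v.isLt; omega) hval
      show ((middlePath (2*k)).diam : ℤ) + 1 ≤ ((middlePath (2*k)).dist u v : ℤ) +
        |((phiE k (u:ℕ) : ℤ)) - ((phiE k (v:ℕ) : ℤ))|
      rw [abs_sub_natCast]
      omega
    refine le_trans (Nat.sInf_le ⟨φ, hlab, rfl⟩) ?_
    refine Finset.sup_le fun p _ => ?_
    have b1 := phiE_le k (p.1 : ℕ) hk (by have := p.1.isLt; omega)
    have b2 := phiE_le k (p.2 : ℕ) hk (by have := p.2.isLt; omega)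
    have hkk : 1 ≤ 4*k*k := by nlinarith
    show ((phiE k (p.1:ℕ) : ℤ) - (phiE k (p.2:ℕ) : ℤ)).natAbs ≤ 4*k*k - 1
    omega
  · -- odd case
    rw [show 4 * k * (k + 1) = 4*k*k + 4*k from by ring]
    set φ : Fin (2 * (2*k+1) - 1) → ℕ := fun w => phiO k (w : ℕ) with hφ
    have hlab : IsRadioLabeling (middlePath (2*k+1)) φ := by
      intro u v huv
      have hval : (u:ℕ) ≠ (v:ℕ) := fun h => huv (Fin.ext h)
      have h1 : (middlePath (2*k+1)).diam ≤ 2*k+1 := middlePath_diam_le _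
      have h2 : Dn (u:ℕ) (v:ℕ) ≤ (middlePath (2*k+1)).dist u v := middlePath_dist_ge u v
      have h3 := keyO k (u:ℕ) (v:ℕ) hk (by have := u.isLt; omega) (by have := v.isLt; omega) hval
      show ((middlePath (2*k+1)).diam : ℤ) + 1 ≤ ((middlePath (2*k+1)).dist u v : ℤ) +
        |((phiO k (u:ℕ) : ℤ)) - ((phiO k (v:ℕ) : ℤ))|
      rw [abs_sub_natCast]
      omega
    refine le_trans (Nat.sInf_le ⟨φ, hlab, rfl⟩) ?_
    refine Finset.sup_le fun p _ => ?_
    have b1 := phiO_le k (p.1 : ℕ) hk (by have := p.1.isLt; omega)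
    have b2 := phiO_le k (p.2 : ℕ) hk (by have := p.2.isLt; omega)
    show ((phiO k (p.1:ℕ) : ℤ) - (phiO k (p.2:ℕ) : ℤ)).natAbs ≤ 4*k*k + 4*k
    omega
end
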